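/- Let M be a 2×2 matrix over a field with trace r and determinant Δ ≠ 0. Then M^k is a scalar multiple of the identity matrix if and only if a_k(r, Δ) = 0, where a_k = Σ_{j≥0} (−1)^j C(k−1−j, j) r^{k−1−2j} Δ^j, provided M itself is not a scalar matrix. -/

import Mathlib

open Finset

private def auxA {K : Type*} [Field K] (r Δ : K) : ℕ → K
  | 0 => 0
  | 1 => 1
  | (n+2) => r * auxA r Δ (n+1) - Δ * auxA r Δ n

private lemma S_rec {K : Type*} [Field K] (r Δ : K) (k : ℕ) :
    (∑ j ∈ range (k+2), (-1:K)^j * ((k+2-1-j).choose j : K) * r^(k+2-1-2*j) * Δ^j)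
  = r * (∑ j ∈ range (k+1), (-1:K)^j * ((k+1-1-j).choose j : K) * r^(k+1-1-2*j) * Δ^j)
    - Δ * (∑ j ∈ range k, (-1:K)^j * ((k-1-j).choose j : K) * r^(k-1-2*j) * Δ^j) := by
  rw [Finset.sum_range_succ' _ (k+1), Finset.sum_range_succ,
      Finset.sum_range_succ' _ k]
  have hlast : (-1:K)^(k+1) * (((k+2-1-(k+1)).choose (k+1) : ℕ) : K)
      * r^(k+2-1-2*(k+1)) * Δ^(k+1) = 0 := by
    have : (k+2-1-(k+1)).choose (k+1) = 0 := by
      apply Nat.choose_eq_zero_of_lt; omega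
    simp [this]
  have hterm : ∀ j ∈ range k,
      (-1:K)^(j+1) * (((k+2-1-(j+1)).choose (j+1) : ℕ) : K) * r^(k+2-1-2*(j+1)) * Δ^(j+1)
      = r * ((-1:K)^(j+1) * (((k+1-1-(j+1)).choose (j+1) : ℕ) : K) * r^(k+1-1-2*(j+1)) * Δ^(j+1))
        - Δ * ((-1:K)^j * (((k-1-j).choose j : ℕ) : K) * r^(k-1-2*j) * Δ^j) := by
    intro j hj
    rw [Finset.mem_range] at hj
    have h1 : k+2-1-(j+1) = (k-1-j) + 1 := by omega
    have h2 : k+1-1-(j+1) = k-1-j := by omega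
    rw [h1, h2, Nat.choose_succ_succ]
    by_cases hc : 2*j+2 ≤ k
    · have e1 : k+2-1-2*(j+1) = k-1-2*j := by omega
      have e2 : k-1-2*j = (k+1-1-2*(j+1)) + 1 := by omega
      rw [e1, e2, pow_succ]
      push_cast
      ring
    · have hz : (k-1-j).choose (j+1) = 0 := by
        apply Nat.choose_eq_zero_of_lt; omega
      have e1 : k+2-1-2*(j+1) = k-1-2*j := by omega
      have e2 : k+1-1-2*(j+1) = 0 := by omega
      rw [hz, e1, e2]
      push_cast
      ring
  rw [Finset.sum_congr rfl hterm, Finset.sum_sub_distrib, ← Finset.mul_sum, ← Finset.mul_sum]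
  rw [hlast]
  simp only [Nat.choose_zero_right, Nat.cast_one, pow_zero, Nat.sub_zero]
  have e1 : k + 2 - 1 - 0 = k + 1 := by omega
  have e2 : k + 1 - 1 - 0 = k := by omega
  rw [e1, e2]
  ring

private lemma auxA_eq_S {K : Type*} [Field K] (r Δ : K) : ∀ k : ℕ,
    auxA r Δ k = ∑ j ∈ range k, (-1:K)^j * ((k-1-j).choose j : K) * r^(k-1-2*j) * Δ^j := by
  have key : ∀ k : ℕ,
      (auxA r Δ k = ∑ j ∈ range k, (-1:K)^j * ((k-1-j).choose j : K) * r^(k-1-2*j) * Δ^j) ∧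
      (auxA r Δ (k+1) = ∑ j ∈ range (k+1),
        (-1:K)^j * ((k+1-1-j).choose j : K) * r^(k+1-1-2*j) * Δ^j) := by
    intro k
    induction k with
    | zero => refine ⟨by simp [auxA], by simp [auxA]⟩
    | succ n ih =>
      refine ⟨ih.2, ?_⟩
      show auxA r Δ (n+2) = _
      rw [show auxA r Δ (n+2) = r * auxA r Δ (n+1) - Δ * auxA r Δ n from rfl,
          ih.1, ih.2, ← S_rec]
  exact fun k => (key k).1

private lemma pow_eq_auxA {K : Type*} [Field K] (M : Matrix (Fin 2) (Fin 2) K) (r Δ : K)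
    (hCH : M^2 = r • M - Δ • (1 : Matrix (Fin 2) (Fin 2) K)) :
    ∀ k : ℕ, M^(k+1) = auxA r Δ (k+1) • M - (Δ * auxA r Δ k) • (1 : Matrix (Fin 2) (Fin 2) K) := by
  intro k
  induction k with
  | zero => simp [auxA]
  | succ n ih =>
    rw [pow_succ, ih]
    rw [show auxA r Δ (n+2) = r * auxA r Δ (n+1) - Δ * auxA r Δ n from rfl]
    rw [sub_mul, smul_mul_assoc, smul_mul_assoc, ← pow_two, hCH, one_mul]
    module

/-- Let `M` be a 2×2 matrix over a field with trace `r` and determinant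
`Δ ≠ 0`, and suppose `M` is not a scalar matrix. Then for `k ≥ 1`, `M^k` is a
scalar multiple of the identity iff `a_k(r, Δ) = 0`, where
`a_k = Σ_j (−1)^j C(k−1−j, j) r^{k−1−2j} Δ^j`. -/
theorem power_scalar_iff {K : Type*} [Field K]
    (M : Matrix (Fin 2) (Fin 2) K) (r Δ : K) (hr : r = M.trace) (hΔ : Δ = M.det)
    (hΔ0 : Δ ≠ 0) (hM : ¬∃ c : K, M = c • (1 : Matrix (Fin 2) (Fin 2) K)) :
    ∀ k : ℕ, 1 ≤ k →
      ((∃ c : K, M ^ k = c • (1 : Matrix (Fin 2) (Fin 2) K)) ↔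
        (∑ j ∈ Finset.range k,
            (-1 : K) ^ j * ((k - 1 - j).choose j : K) * r ^ (k - 1 - 2 * j) * Δ ^ j)
          = 0) := by
  have hCH : M^2 = r • M - Δ • (1 : Matrix (Fin 2) (Fin 2) K) := by
    subst hr hΔ
    ext i j
    fin_cases i <;> fin_cases j <;>
      simp [pow_two, Matrix.mul_apply, Matrix.trace, Matrix.det_fin_two,
        Fin.sum_univ_two, Matrix.one_apply] <;> ring
  intro k hk
  obtain ⟨m, rfl⟩ : ∃ m, k = m + 1 := ⟨k - 1, by omega⟩
  rw [← auxA_eq_S]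
  have hP := pow_eq_auxA M r Δ hCH m
  constructor
  · rintro ⟨c, hc⟩
    by_contra ha
    apply hM
    have h1 : auxA r Δ (m+1) • M = (c + Δ * auxA r Δ m) • (1 : Matrix (Fin 2) (Fin 2) K) := by
      rw [hc] at hP
      rw [add_smul]
      rw [eq_sub_iff_add_eq] at hP
      exact hP.symm
    refine ⟨(auxA r Δ (m+1))⁻¹ * (c + Δ * auxA r Δ m), ?_⟩
    rw [mul_smul, ← h1, smul_smul, inv_mul_cancel₀ ha, one_smul]
  · intro ha
    exact ⟨-(Δ * auxA r Δ m), by rw [hP, ha, zero_smul, zero_sub, neg_smul]⟩
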